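/- Let λ⁻ be the smallest eigenvalue of H. Then: (a) the λ⁻-eigenspace of H is one-dimensional (λ⁻ is a simple eigenvalue); (b) every nonzero vector v with Hv = λ⁻v satisfies ⟨v, ψ(0)⟩ ≠ 0; and (c) λ⁻ < −γφ_0 for every γ > 0. -/

import Mathlib

open Matrix

variable {V : Type*} [Fintype V] [DecidableEq V]

/-- The search Hamiltonian `H = -γ•A - ∑_{w ∈ W} e_w e_wᵀ`. -/
noncomputable def searchH (A : Matrix V V ℝ) (W : Finset V) (γ : ℝ) : Matrix V V ℝ :=
  (-γ) • A - ∑ w ∈ W, Matrix.vecMulVec (Pi.single w 1) (Pi.single w 1)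

/-- `μ` is a (real) eigenvalue of the matrix `M`. -/
def IsEig (M : Matrix V V ℝ) (μ : ℝ) : Prop :=
  ∃ x, x ≠ 0 ∧ M.mulVec x = μ • x

lemma isEig_eigenvalues (M : Matrix V V ℝ) (hM : M.IsHermitian) (i : V) :
    IsEig M (hM.eigenvalues i) :=
  ⟨hM.eigenvectorBasis i, by simpa using hM.eigenvectorBasis.orthonormal.ne_zero i,
    hM.mulVec_eigenvectorBasis i⟩

/-- If `lam` is below every eigenvalue of the symmetric matrix `M`, then `M - lam•1` is PSD. -/
lemma psd_sub (M : Matrix V V ℝ) (hM : M.IsHermitian) (lam : ℝ)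
    (hmin : ∀ μ, IsEig M μ → lam ≤ μ) : (M - lam • 1).PosSemidef := by
  have hN : (M - lam • (1 : Matrix V V ℝ)).IsHermitian := by
    refine hM.sub ?_
    rw [Matrix.smul_one_eq_diagonal]
    exact Matrix.isHermitian_diagonal_iff.mpr fun i => by simp [_root_.IsSelfAdjoint, star_trivial]
  refine hN.posSemidef_iff_eigenvalues_nonneg.mpr (Pi.le_def.mpr fun i => (?_ : 0 ≤ hN.eigenvalues i))
  obtain ⟨x, hx0, hx⟩ := isEig_eigenvalues _ hN i
  have hMx : M.mulVec x = (hN.eigenvalues i + lam) • x := by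
    have h1 : (M - lam • (1 : Matrix V V ℝ)).mulVec x
        = M.mulVec x - lam • x := by
      rw [Matrix.sub_mulVec, Matrix.smul_mulVec, Matrix.one_mulVec]
    rw [h1] at hx
    have := congrArg (· + lam • x) hx
    simpa [sub_add_cancel, add_smul, add_comm] using this
  have := hmin _ ⟨x, hx0, hMx⟩
  linarith

/-- Rayleigh lower bound for the minimal eigenvalue. -/
lemma rayleigh_lb (M : Matrix V V ℝ) (hM : M.IsHermitian) (lam : ℝ)
    (hmin : ∀ μ, IsEig M μ → lam ≤ μ) (x : V → ℝ) :
    lam * (x ⬝ᵥ x) ≤ x ⬝ᵥ M.mulVec x := by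
  have hpsd := psd_sub M hM lam hmin
  have h := (Matrix.posSemidef_iff_dotProduct_mulVec.mp hpsd).2 x
  have hx : star x = x := by
    funext i; simp
  rw [hx, Matrix.sub_mulVec, Matrix.smul_mulVec, Matrix.one_mulVec,
    dotProduct_sub, dotProduct_smul] at h
  simp only [smul_eq_mul] at h
  linarith

/-- Perron–Frobenius for a symmetric matrix with nonpositive entries whose support
contains the edges of a connected graph: the coordinatewise absolute value of a
minimal eigenvector is again a minimal eigenvector, and has strictly positive entries. -/
lemma perron (G : SimpleGraph V) (hG : G.Connected)
    (M : Matrix V V ℝ) (hM : M.IsHermitian)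
    (hM0 : ∀ i j, M i j ≤ 0) (hMadj : ∀ i j, G.Adj i j → M i j ≠ 0)
    (lam : ℝ) (hmin : ∀ μ, IsEig M μ → lam ≤ μ)
    (v : V → ℝ) (hv : v ≠ 0) (hveig : M.mulVec v = lam • v) :
    (∀ i, 0 < |v i|) ∧ M.mulVec (fun i => |v i|) = lam • (fun i => |v i|) := by
  set s : V → ℝ := fun i => |v i| with hs
  -- quadratic form of v
  have hqv : v ⬝ᵥ M.mulVec v = lam * (v ⬝ᵥ v) := by
    rw [hveig, dotProduct_smul, smul_eq_mul]
  have hss : s ⬝ᵥ s = v ⬝ᵥ v := by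
    simp only [dotProduct, hs]
    exact Finset.sum_congr rfl fun i _ => abs_mul_abs_self (v i)
  -- quadratic form comparison
  have hcomp : s ⬝ᵥ M.mulVec s ≤ v ⬝ᵥ M.mulVec v := by
    simp only [dotProduct, Matrix.mulVec, dotProduct, Finset.mul_sum]
    refine Finset.sum_le_sum fun i _ => Finset.sum_le_sum fun j _ => ?_
    have h1 : M i j * (s i * s j) ≤ M i j * (v i * v j) := by
      have : v i * v j ≤ s i * s j := by
        rw [hs]; simpa [abs_mul] using le_abs_self (v i * v j)
      exact mul_le_mul_of_nonpos_left this (hM0 i j)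
    calc s i * (M i j * s j) = M i j * (s i * s j) := by ring
      _ ≤ M i j * (v i * v j) := h1
      _ = v i * (M i j * v j) := by ring
  -- equality of quadratic forms, hence s is an eigenvector
  have hray := rayleigh_lb M hM lam hmin s
  have heq : s ⬝ᵥ M.mulVec s = lam * (s ⬝ᵥ s) := by
    rw [hss]; linarith [hqv, hcomp, hray, hss ▸ hray]
  have hseig : M.mulVec s = lam • s := by
    have hpsd := psd_sub M hM lam hmin
    have hz : star s ⬝ᵥ (M - lam • 1).mulVec s = 0 := by
      have hsx : star s = s := by funext i; simp
      rw [hsx, Matrix.sub_mulVec, Matrix.smul_mulVec, Matrix.one_mulVec,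
        dotProduct_sub, dotProduct_smul, heq]
      simp
    have := (hpsd.dotProduct_mulVec_zero_iff s).mp hz
    rw [Matrix.sub_mulVec, Matrix.smul_mulVec, Matrix.one_mulVec,
      sub_eq_zero] at this
    exact this
  -- zero coordinates propagate along edges
  have hsnonneg : ∀ i, 0 ≤ s i := fun i => abs_nonneg _
  have hstep : ∀ i j, G.Adj i j → s i = 0 → s j = 0 := by
    intro i j hadj hzi
    have h0 : (M.mulVec s) i = 0 := by
      rw [hseig]; simp [hzi]
    have hterms : ∀ k ∈ Finset.univ, M i k * s k ≤ 0 :=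
      fun k _ => mul_nonpos_iff.mpr (Or.inr ⟨hM0 i k, hsnonneg k⟩)
    have hsum : ∑ k, M i k * s k = 0 := h0
    have := (Finset.sum_eq_zero_iff_of_nonpos hterms).mp hsum j (Finset.mem_univ j)
    rcases mul_eq_zero.mp this with h | h
    · exact absurd h (hMadj i j hadj)
    · exact h
  have hwalk : ∀ (a b : V) (_ : G.Walk a b), s a = 0 → s b = 0 := by
    intro a b p
    induction p with
    | nil => exact id
    | cons h _ ih => exact fun ha => ih (hstep _ _ h ha)
  -- positivity
  have hpos : ∀ i, 0 < |v i| := by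
    intro i
    rcases (abs_nonneg (v i)).lt_or_eq with h | h
    · exact h
    · exfalso
      obtain ⟨i0, hi0⟩ := Function.ne_iff.mp hv
      obtain ⟨p⟩ := hG.preconnected i i0
      have : s i0 = 0 := hwalk i i0 p h.symm
      exact hi0 (abs_eq_zero.mp this)
  exact ⟨hpos, hseig⟩

/-- A minimal eigenvector with a zero coordinate is zero. -/
lemma perron_zero (G : SimpleGraph V) (hG : G.Connected)
    (M : Matrix V V ℝ) (hM : M.IsHermitian)
    (hM0 : ∀ i j, M i j ≤ 0) (hMadj : ∀ i j, G.Adj i j → M i j ≠ 0)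
    (lam : ℝ) (hmin : ∀ μ, IsEig M μ → lam ≤ μ)
    (v : V → ℝ) (hveig : M.mulVec v = lam • v) (i0 : V) (h0 : v i0 = 0) : v = 0 := by
  by_contra hv
  have := (perron G hG M hM hM0 hMadj lam hmin v hv hveig).1 i0
  rw [h0] at this
  simp at this

lemma searchH_apply (A : Matrix V V ℝ) (W : Finset V) (γ : ℝ) (i j : V) :
    searchH A W γ i j = -γ * A i j - ∑ w ∈ W, (Pi.single w 1 : V → ℝ) i * (Pi.single w 1 : V → ℝ) j := by
  simp [searchH, Matrix.sub_apply, Matrix.sum_apply, Matrix.vecMulVec_apply]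

lemma vecMulVec_mulVec' (a b x : V → ℝ) :
    (Matrix.vecMulVec a b).mulVec x = (b ⬝ᵥ x) • a := by
  funext i
  simp only [Matrix.mulVec, dotProduct, Matrix.vecMulVec_apply, Pi.smul_apply, smul_eq_mul,
    Finset.sum_mul, Finset.mul_sum]
  exact Finset.sum_congr rfl fun j _ => by ring

lemma sum_mulVec' {ι : Type*} (Ws : Finset ι) (f : ι → Matrix V V ℝ) (x : V → ℝ) :
    (∑ w ∈ Ws, f w).mulVec x = ∑ w ∈ Ws, (f w).mulVec x := by
  funext i
  simp only [Matrix.mulVec, dotProduct, Matrix.sum_apply, Finset.sum_apply, Finset.sum_mul]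
  exact Finset.sum_comm

lemma dotProduct_sum' {ι : Type*} (Ws : Finset ι) (x : V → ℝ) (f : ι → V → ℝ) :
    x ⬝ᵥ (∑ w ∈ Ws, f w) = ∑ w ∈ Ws, x ⬝ᵥ f w := by
  simp only [dotProduct, Finset.sum_apply, Finset.mul_sum]
  exact Finset.sum_comm

theorem stmt5 (G : SimpleGraph V) [DecidableRel G.Adj] (hG : G.Connected)
    (W : Finset V) (hW : W.Nonempty) (γ : ℝ) (hγ : 0 < γ)
    (φ₀ : ℝ) (hφ₀ : IsEig (G.adjMatrix ℝ) φ₀ ∧ ∀ μ, IsEig (G.adjMatrix ℝ) μ → μ ≤ φ₀)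
    (ψ : V → ℝ) (hψeig : (G.adjMatrix ℝ).mulVec ψ = φ₀ • ψ) (hψunit : ∑ i, ψ i ^ 2 = 1)
    (lam : ℝ)
    (hlam : IsEig (searchH (G.adjMatrix ℝ) W γ) lam ∧
      ∀ μ, IsEig (searchH (G.adjMatrix ℝ) W γ) μ → lam ≤ μ) :
    Module.finrank ℝ
        ↥(Module.End.eigenspace (Matrix.mulVecLin (searchH (G.adjMatrix ℝ) W γ)) lam) = 1 ∧
      (∀ v : V → ℝ, v ≠ 0 → (searchH (G.adjMatrix ℝ) W γ).mulVec v = lam • v →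
        v ⬝ᵥ ψ ≠ 0) ∧
      lam < -γ * φ₀ := by
  classical
  set A := G.adjMatrix ℝ with hA
  set H := searchH A W γ with hH
  have hAapply : ∀ i j, A i j = if G.Adj i j then 1 else 0 := fun i j => by
    simp [hA, SimpleGraph.adjMatrix_apply]
  have hAnn : ∀ i j, 0 ≤ A i j := by
    intro i j; rw [hAapply]; split_ifs <;> norm_num
  have hsum_nonneg : ∀ i j, 0 ≤ ∑ w ∈ W,
      (Pi.single w 1 : V → ℝ) i * (Pi.single w 1 : V → ℝ) j := by
    intro i j
    refine Finset.sum_nonneg fun w _ => mul_nonneg ?_ ?_ <;>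
      · rw [Pi.single_apply]; split_ifs <;> norm_num
  have hH0 : ∀ i j, H i j ≤ 0 := by
    intro i j
    rw [hH, searchH_apply]
    have h1 := hAnn i j
    have h2 := hsum_nonneg i j
    nlinarith
  have hHadj : ∀ i j, G.Adj i j → H i j ≠ 0 := by
    intro i j hadj
    rw [hH, searchH_apply]
    have h1 : A i j = 1 := by rw [hAapply]; simp [hadj]
    have h2 := hsum_nonneg i j
    rw [h1]
    intro hc
    nlinarith
  have hAsymm : ∀ i j, A i j = A j i := by
    intro i j
    rw [hAapply, hAapply]
    exact if_congr (G.adj_comm i j) rfl rfl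
  have hHsym : H.IsHermitian := by
    unfold Matrix.IsHermitian
    ext i j
    rw [conjTranspose_apply, star_trivial, hH, searchH_apply, searchH_apply]
    congr 1
    · rw [hAsymm]
    · exact Finset.sum_congr rfl fun w _ => mul_comm _ _
  -- Perron data for H
  obtain ⟨v₀, hv₀0, hv₀eig⟩ := hlam.1
  obtain ⟨spos, hseig⟩ := perron G hG H hHsym hH0 hHadj lam hlam.2 v₀ hv₀0 hv₀eig
  set s : V → ℝ := fun i => |v₀ i| with hsdef
  -- Perron data for -A
  have hA0' : ∀ i j, (-A) i j ≤ 0 := fun i j => by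
    simp only [Matrix.neg_apply, neg_nonpos]; exact hAnn i j
  have hAadj' : ∀ i j, G.Adj i j → (-A) i j ≠ 0 := by
    intro i j hadj
    simp only [Matrix.neg_apply, ne_eq, neg_eq_zero]
    rw [hAapply]; simp [hadj]
  have hAsym' : (-A).IsHermitian := by
    unfold Matrix.IsHermitian
    ext i j
    rw [conjTranspose_apply, star_trivial]
    simp [hAsymm i j]
  have hminA : ∀ μ, IsEig (-A) μ → -φ₀ ≤ μ := by
    rintro μ ⟨x, hx0, hx⟩
    rw [Matrix.neg_mulVec] at hx
    have hx' : A.mulVec x = (-μ) • x := by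
      rw [neg_smul, ← hx, neg_neg]
    have := hφ₀.2 _ ⟨x, hx0, hx'⟩
    linarith
  have hψ0 : ψ ≠ 0 := by
    intro h
    rw [h] at hψunit
    simp at hψunit
  have hψeig' : (-A).mulVec ψ = (-φ₀) • ψ := by
    rw [Matrix.neg_mulVec, hψeig, neg_smul]
  obtain ⟨tpos, hteig⟩ := perron G hG (-A) hAsym' hA0' hAadj' (-φ₀) hminA ψ hψ0 hψeig'
  set t : V → ℝ := fun i => |ψ i| with htdef
  haveI hne : Nonempty V := hG.nonempty
  obtain ⟨i0⟩ := id hne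
  -- ψ is proportional to t
  have hψt : ψ = (ψ i0 / t i0) • t := by
    have hw : (-A).mulVec (t i0 • ψ - ψ i0 • t) = (-φ₀) • (t i0 • ψ - ψ i0 • t) := by
      rw [Matrix.mulVec_sub, Matrix.mulVec_smul, Matrix.mulVec_smul, hψeig', hteig]
      module
    have hw0 := perron_zero G hG (-A) hAsym' hA0' hAadj' (-φ₀) hminA _ hw i0
      (by simp [mul_comm])
    have hti0 : t i0 ≠ 0 := (tpos i0).ne'
    funext i
    have h := congrFun hw0 i
    simp only [Pi.sub_apply, Pi.smul_apply, smul_eq_mul, Pi.zero_apply] at h ⊢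
    field_simp
    linarith [h]
  have hψc : ψ i0 / t i0 ≠ 0 := by
    intro h
    apply hψ0
    rw [hψt, h, zero_smul]
  -- membership criterion for the eigenspace
  have hmemE : ∀ x : V → ℝ,
      x ∈ Module.End.eigenspace (Matrix.mulVecLin H) lam ↔ H.mulVec x = lam • x := by
    intro x
    rw [Module.End.mem_eigenspace_iff, Matrix.mulVecLin_apply]
  have hsne : s ≠ 0 := fun h => absurd (congrFun h i0) (spos i0).ne'
  have hspan : Module.End.eigenspace (Matrix.mulVecLin H) lam = Submodule.span ℝ {s} := by
    apply le_antisymm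
    · intro u hu
      rw [hmemE] at hu
      have hw : H.mulVec (s i0 • u - u i0 • s) = lam • (s i0 • u - u i0 • s) := by
        rw [Matrix.mulVec_sub, Matrix.mulVec_smul, Matrix.mulVec_smul, hu, hseig]
        module
      have hw0 := perron_zero G hG H hHsym hH0 hHadj lam hlam.2 _ hw i0 (by simp [mul_comm])
      rw [Submodule.mem_span_singleton]
      refine ⟨u i0 / s i0, ?_⟩
      have hsi0 : s i0 ≠ 0 := (spos i0).ne'
      funext i
      have h := congrFun hw0 i
      simp only [Pi.sub_apply, Pi.smul_apply, smul_eq_mul, Pi.zero_apply] at h ⊢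
      field_simp
      linarith [h]
    · rw [Submodule.span_le, Set.singleton_subset_iff]
      exact (hmemE s).mpr hseig
  refine ⟨?_, ?_, ?_⟩
  · rw [hspan]
    exact finrank_span_singleton hsne
  · -- part (b)
    intro v hv hveig
    have hvmem : v ∈ Submodule.span ℝ {s} := by
      rw [← hspan, hmemE]; exact hveig
    obtain ⟨c, hc⟩ := Submodule.mem_span_singleton.mp hvmem
    have hcne : c ≠ 0 := by
      rintro rfl
      rw [zero_smul] at hc
      exact hv hc.symm
    have hst : 0 < s ⬝ᵥ t :=
      Finset.sum_pos (fun i _ => mul_pos (spos i) (tpos i)) Finset.univ_nonempty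
    rw [← hc, hψt, dotProduct_smul, smul_dotProduct, smul_eq_mul, smul_eq_mul]
    exact mul_ne_zero hψc (mul_ne_zero hcne hst.ne')
  · -- part (c)
    have hray := rayleigh_lb H hHsym lam hlam.2 ψ
    have hψψ : ψ ⬝ᵥ ψ = 1 := by
      rw [dotProduct]
      rw [← hψunit]
      exact Finset.sum_congr rfl fun i _ => (sq (ψ i)).symm
    have hPψ : ψ ⬝ᵥ ((∑ w ∈ W, Matrix.vecMulVec (Pi.single w (1:ℝ)) (Pi.single w 1)).mulVec ψ)
        = ∑ w ∈ W, ψ w ^ 2 := by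
      rw [sum_mulVec', dotProduct_sum']
      refine Finset.sum_congr rfl fun w _ => ?_
      rw [vecMulVec_mulVec', single_dotProduct, dotProduct_smul, dotProduct_single]
      simp [sq]
    have hHψ : ψ ⬝ᵥ H.mulVec ψ = -γ * φ₀ - ∑ w ∈ W, ψ w ^ 2 := by
      rw [hH]
      unfold searchH
      rw [Matrix.sub_mulVec, Matrix.smul_mulVec, dotProduct_sub, dotProduct_smul, hψeig,
        dotProduct_smul, hψψ, hPψ]
      simp
    obtain ⟨w0, hw0⟩ := hW
    have hψw0 : ψ w0 ≠ 0 := abs_pos.mp (tpos w0)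
    have hsumpos : 0 < ∑ w ∈ W, ψ w ^ 2 :=
      Finset.sum_pos' (fun w _ => sq_nonneg _)
        ⟨w0, hw0, lt_of_le_of_ne (sq_nonneg _) (Ne.symm (pow_ne_zero 2 hψw0))⟩
    rw [hψψ, hHψ, mul_one] at hray
    linarith
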